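/- Let Γ be a locally rectifiable Jordan curve, w ∉ Γ, δ(w) = dist(w,Γ), p ≥ 2, F(z) = (w−z)^{-1}. Write Γ_{2w} = Γ ∩ B(w, 2δ(w)) and suppose ℓ(Γ_{2w}) ≥ 2δ(w). Then ∫_{Γ \ B(w,4δ(w))} |ζ−w|^{-2} |dζ| ≤ C δ(w)^{p-1} ‖F‖_{B_p(Γ)}^p, where C depends only on p. -/

import Mathlib

open MeasureTheory Complex Set Metric
open scoped ENNReal Real

noncomputable section

/-- `γ : ℝ → ℂ` is an (injective) arc-length parametrization: the arc length of `γ` over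
`[s, t]` equals `t - s`. Its range is then a locally rectifiable Jordan curve through `∞`. -/
def IsArcLengthParam (γ : ℝ → ℂ) : Prop :=
  Function.Injective γ ∧
    ∀ s t : ℝ, s ≤ t → eVariationOn γ (Set.Icc s t) = ENNReal.ofReal (t - s)

/-- The boundary Besov `p`-norm (to the `p`-th power) of the test function
`F(z) = (w - z)⁻¹` on the curve parametrized by arc length by `γ`:
`‖F‖_{B_p(Γ)}^p = ∫_Γ ∫_Γ |F(ζ) - F(η)|^p |ζ - η|^{-2} |dζ| |dη|`. -/
def besovTest (p : ℝ) (γ : ℝ → ℂ) (w : ℂ) : ℝ≥0∞ :=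
  ∫⁻ s : ℝ, ∫⁻ t : ℝ,
    ENNReal.ofReal (‖(w - γ s)⁻¹ - (w - γ t)⁻¹‖ ^ p * dist (γ s) (γ t) ^ (-2 : ℝ))

/-- For `p ≥ 2`, `w ∉ Γ`, `F(z) = (w-z)⁻¹` and `Γ_{2w} = Γ ∩ B(w, 2δ(w))` with
`ℓ(Γ_{2w}) ≥ 2δ(w)`, one has
`∫_{Γ∖B(w,4δ(w))} |ζ-w|^{-2} |dζ| ≤ C δ(w)^{p-1} ‖F‖_{B_p(Γ)}^p`, `C = C(p)`. -/
theorem statement17 (p : ℝ) (hp : 2 ≤ p) :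
    ∃ C : ℝ, 0 < C ∧
      ∀ (γ : ℝ → ℂ) (w : ℂ) (d : ℝ),
        IsArcLengthParam γ → w ∉ Set.range γ →
        d = Metric.infDist w (Set.range γ) → 0 < d →
        ENNReal.ofReal (2 * d) ≤ volume (γ ⁻¹' Metric.ball w (2 * d)) →
        (∫⁻ t in (γ ⁻¹' Metric.ball w (4 * d))ᶜ,
            ENNReal.ofReal (dist (γ t) w ^ (-2 : ℝ))) ≤
          ENNReal.ofReal (C * d ^ (p - 1)) * besovTest p γ w := by
  refine ⟨(2:ℝ) ^ (2*p - 3), Real.rpow_pos_of_pos two_pos _, ?_⟩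
  intro γ w d harc hw hd hdpos hlen
  have hlip : LipschitzWith 1 γ := by
    intro s t
    rcases le_total s t with h | h
    · have := eVariationOn.edist_le γ (Set.left_mem_Icc.2 h) (Set.right_mem_Icc.2 h)
      rw [(harc.2 s t h)] at this
      calc edist (γ s) (γ t) ≤ ENNReal.ofReal (t - s) := this
        _ = edist s t := by
            rw [edist_dist, Real.dist_eq, abs_sub_comm, _root_.abs_of_nonneg (by linarith)]
        _ ≤ 1 * edist s t := by simp
    · have := eVariationOn.edist_le γ (Set.right_mem_Icc.2 h) (Set.left_mem_Icc.2 h)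
      rw [(harc.2 t s h)] at this
      calc edist (γ s) (γ t) ≤ ENNReal.ofReal (s - t) := this
        _ = edist s t := by
            rw [edist_dist, Real.dist_eq, _root_.abs_of_nonneg (by linarith)]
        _ ≤ 1 * edist s t := by simp
  have hγcont : Continuous γ := hlip.continuous
  set A : Set ℝ := γ ⁻¹' Metric.ball w (2 * d) with hAdef
  set B : Set ℝ := (γ ⁻¹' Metric.ball w (4 * d))ᶜ with hBdef
  have hAmeas : MeasurableSet A := (isOpen_ball.preimage hγcont).measurableSet
  have hBmeas : MeasurableSet B := (isOpen_ball.preimage hγcont).measurableSet.compl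
  set c : ℝ := (2:ℝ) ^ (2 - p) * (2 * d) ^ (-p) with hcdef
  have hcpos : 0 < c := by positivity
  set I : ℝ≥0∞ := ∫⁻ t in B, ENNReal.ofReal (dist (γ t) w ^ (-2 : ℝ)) with hIdef
  -- pointwise bound
  have key : ∀ s ∈ A, ∀ t ∈ B,
      ENNReal.ofReal (c * dist (γ t) w ^ (-2 : ℝ)) ≤
      ENNReal.ofReal (‖(w - γ s)⁻¹ - (w - γ t)⁻¹‖ ^ p * dist (γ s) (γ t) ^ (-2 : ℝ)) := by
    intro s hs t ht
    apply ENNReal.ofReal_le_ofReal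
    set a : ℝ := dist (γ s) w with hadef
    set b : ℝ := dist (γ t) w with hbdef
    set r : ℝ := dist (γ s) (γ t) with hrdef
    have ha2 : a < 2 * d := by
      have : γ s ∈ Metric.ball w (2 * d) := hs
      simpa [hadef, dist_comm] using this
    have had : d ≤ a := by
      rw [hd, hadef, dist_comm]
      exact Metric.infDist_le_dist_of_mem ⟨s, rfl⟩
    have hb4 : 4 * d ≤ b := by
      have : γ t ∉ Metric.ball w (4 * d) := ht
      simpa [hbdef, dist_comm, not_lt] using this
    have hapos : 0 < a := lt_of_lt_of_le hdpos had
    have hbpos : 0 < b := by linarith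
    have hrge : b / 2 ≤ r := by
      have htri : b ≤ r + a := by
        rw [hbdef, hrdef]
        calc dist (γ t) w ≤ dist (γ t) (γ s) + dist (γ s) w := dist_triangle _ _ _
          _ = dist (γ s) (γ t) + dist (γ s) w := by rw [dist_comm (γ t) (γ s)]
      linarith
    have hrpos : 0 < r := by linarith
    have hws : w - γ s ≠ 0 := by
      intro h; apply hw; exact ⟨s, by rw [sub_eq_zero] at h; exact h.symm⟩
    have hwt : w - γ t ≠ 0 := by
      intro h; apply hw; exact ⟨t, by rw [sub_eq_zero] at h; exact h.symm⟩
    have hnorm : ‖(w - γ s)⁻¹ - (w - γ t)⁻¹‖ = r / (a * b) := by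
      have heq : (w - γ s)⁻¹ - (w - γ t)⁻¹ = (γ s - γ t) / ((w - γ s) * (w - γ t)) := by
        field_simp
        ring
      rw [heq, norm_div, norm_mul]
      rw [hrdef, dist_eq_norm, hadef, hbdef, dist_eq_norm, dist_eq_norm]
      rw [show ‖w - γ s‖ = ‖γ s - w‖ from norm_sub_rev _ _,
        show ‖w - γ t‖ = ‖γ t - w‖ from norm_sub_rev _ _]
    rw [hnorm]
    have hexp : (r / (a * b)) ^ p * r ^ (-2 : ℝ) = r ^ (p - 2) * (a ^ (-p) * b ^ (-p)) := by
      rw [Real.div_rpow hrpos.le (by positivity), Real.mul_rpow hapos.le hbpos.le]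
      rw [show r ^ (p - 2) = r ^ p * r ^ (-2 : ℝ) from by
        rw [← Real.rpow_add hrpos]; ring_nf]
      rw [Real.rpow_neg hapos.le, Real.rpow_neg hbpos.le, div_eq_mul_inv, mul_inv]
      ring
    rw [hexp]
    have e1 : (b / 2) ^ (p - 2) ≤ r ^ (p - 2) :=
      Real.rpow_le_rpow (by positivity) hrge (by linarith)
    have e2 : (2 * d) ^ (-p) ≤ a ^ (-p) :=
      Real.rpow_le_rpow_of_nonpos hapos ha2.le (by linarith)
    have hb2 : (b / 2) ^ (p - 2) = (2:ℝ) ^ (2 - p) * b ^ (p - 2) := by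
      rw [Real.div_rpow hbpos.le (by norm_num), div_eq_mul_inv,
        ← Real.rpow_neg (by norm_num : (0:ℝ) ≤ 2), neg_sub]
      ring
    have hbb : b ^ (p - 2) * b ^ (-p) = b ^ (-2 : ℝ) := by
      rw [← Real.rpow_add hbpos]; ring_nf
    calc c * b ^ (-2 : ℝ) = (b / 2) ^ (p - 2) * ((2 * d) ^ (-p) * b ^ (-p)) := by
          rw [hb2, hcdef]; rw [← hbb]; ring
      _ ≤ r ^ (p - 2) * (a ^ (-p) * b ^ (-p)) := by
          apply mul_le_mul e1 (mul_le_mul_of_nonneg_right e2 (by positivity))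
            (by positivity) (by positivity)
  -- main lower bound for the Besov norm
  have main : ENNReal.ofReal (2 * d) * (ENNReal.ofReal c * I) ≤ besovTest p γ w := by
    have hstep : ∀ s ∈ A, ENNReal.ofReal c * I ≤
        ∫⁻ t : ℝ, ENNReal.ofReal
          (‖(w - γ s)⁻¹ - (w - γ t)⁻¹‖ ^ p * dist (γ s) (γ t) ^ (-2 : ℝ)) := by
      intro s hs
      calc ENNReal.ofReal c * I
          = ∫⁻ t in B, ENNReal.ofReal c * ENNReal.ofReal (dist (γ t) w ^ (-2 : ℝ)) := by
            rw [hIdef, lintegral_const_mul' _ _ ENNReal.ofReal_ne_top]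
        _ = ∫⁻ t in B, ENNReal.ofReal (c * dist (γ t) w ^ (-2 : ℝ)) := by
            congr 1; funext t; rw [ENNReal.ofReal_mul hcpos.le]
        _ ≤ ∫⁻ t in B, ENNReal.ofReal
              (‖(w - γ s)⁻¹ - (w - γ t)⁻¹‖ ^ p * dist (γ s) (γ t) ^ (-2 : ℝ)) :=
            setLIntegral_mono' hBmeas (fun t ht => key s hs t ht)
        _ ≤ _ := setLIntegral_le_lintegral _ _
    calc ENNReal.ofReal (2 * d) * (ENNReal.ofReal c * I)
        ≤ volume A * (ENNReal.ofReal c * I) := mul_le_mul_left hlen _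
      _ = ∫⁻ _ in A, (ENNReal.ofReal c * I) := by rw [setLIntegral_const, mul_comm]
      _ ≤ ∫⁻ s in A, ∫⁻ t : ℝ, ENNReal.ofReal
            (‖(w - γ s)⁻¹ - (w - γ t)⁻¹‖ ^ p * dist (γ s) (γ t) ^ (-2 : ℝ)) :=
          setLIntegral_mono' hAmeas hstep
      _ ≤ besovTest p γ w := setLIntegral_le_lintegral _ _
  -- conclude
  have hkpos : 0 < 2 * d * c := by positivity
  have hKmain : ENNReal.ofReal (2 * d * c) * I ≤ besovTest p γ w := by
    rw [ENNReal.ofReal_mul (by linarith : (0:ℝ) ≤ 2 * d), mul_assoc]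
    exact main
  have hK0 : ENNReal.ofReal (2 * d * c) ≠ 0 := by
    simp [ENNReal.ofReal_eq_zero, not_le, hkpos]
  have hCd : ENNReal.ofReal ((2:ℝ) ^ (2*p - 3) * d ^ (p - 1)) =
      (ENNReal.ofReal (2 * d * c))⁻¹ := by
    rw [← ENNReal.ofReal_inv_of_pos hkpos]
    congr 1
    have h1 : 2 * d * c = (2:ℝ) ^ (3 - 2*p) * d ^ (1 - p) := by
      rw [hcdef]
      have : 2 * d * ((2:ℝ) ^ (2 - p) * (2 * d) ^ (-p))
          = (2:ℝ) ^ (2 - p) * ((2 * d) ^ (1:ℝ) * (2 * d) ^ (-p)) := by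
        rw [Real.rpow_one]; ring
      rw [this, ← Real.rpow_add (by linarith : (0:ℝ) < 2 * d),
        Real.mul_rpow (by norm_num : (0:ℝ) ≤ 2) hdpos.le,
        ← mul_assoc, ← Real.rpow_add two_pos]
      ring_nf
    rw [h1, mul_inv, ← Real.rpow_neg (by norm_num : (0:ℝ) ≤ 2), ← Real.rpow_neg hdpos.le]
    ring_nf
  rw [hCd]
  calc I = (ENNReal.ofReal (2 * d * c))⁻¹ * (ENNReal.ofReal (2 * d * c) * I) := by
        rw [← mul_assoc, ENNReal.inv_mul_cancel hK0 ENNReal.ofReal_ne_top, one_mul]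
    _ ≤ (ENNReal.ofReal (2 * d * c))⁻¹ * besovTest p γ w := mul_le_mul_right hKmain _
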